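/- Let A = e^{∫(r−β)}, B = e^{∫(2r−β)}, C = e^{−∫β} (integrals over [t_{i-1}, t_i]) with e^{∫β} > 1, and suppose m₁ = m₀·A + c·(1 − C) and v₁ = v₀·B + c²·(1 − C) for reals m₀, m₁, v₀, v₁, c. Then v₁ − m₁² = (v₀ − m₀²)·B + (m₁ − m₀·e^{∫r})²/(e^{∫β} − 1). -/
import Mathlib

open Real

theorem stmt_8 (ir iβ m₀ m₁ v₀ v₁ c : ℝ) (hβ : 1 < exp iβ)
    (hm : m₁ = m₀ * exp (ir - iβ) + c * (1 - exp (-iβ)))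
    (hv : v₁ = v₀ * exp (2 * ir - iβ) + c ^ 2 * (1 - exp (-iβ))) :
    v₁ - m₁ ^ 2 = (v₀ - m₀ ^ 2) * exp (2 * ir - iβ)
      + (m₁ - m₀ * exp ir) ^ 2 / (exp iβ - 1) := by
  have hE : exp iβ ≠ 0 := (exp_pos iβ).ne'
  have hE1 : exp iβ - 1 ≠ 0 := by linarith
  have h1 : exp (ir - iβ) = exp ir / exp iβ := by rw [exp_sub]
  have h2 : exp (2 * ir - iβ) = exp ir * exp ir / exp iβ := by
    rw [exp_sub, two_mul, exp_add]
  have h3 : exp (-iβ) = 1 / exp iβ := by rw [exp_neg]; field_simp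
  subst hm hv
  rw [h1, h2, h3]
  field_simp
  ring
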